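/- arXiv:1502.01578 — 2 statements merged into one kernel-verified Lean document; each statement's English description precedes it below -/
import Mathlib

section
/- Let $G$ be a finite cyclic group of order $n$ generated by $\sigma$, $p$ an odd prime with $p \nmid n$, and $M$ a free $\mathbb{Z}$-module of finite rank with a $G$-action such that there exists $m \in M$ with $[M : \mathbb{Z}[G]\cdot m] < \infty$. Then $M/pM$ is a cyclic $\mathbb{F}_p[G]$-module. -/
open TensorProduct

/-- `M ⊗_ℤ R` is a cyclic `R[G]`-module. -/
def IsCyclicGroupRingModule (R : Type*) [CommRing R] (G : Type*) [Monoid G]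
    (M : Type*) [AddCommGroup M] [DistribMulAction G M] : Prop :=
  ∃ m : R ⊗[ℤ] M, Submodule.span R
    {x : R ⊗[ℤ] M | ∃ σ : G,
      x = LinearMap.baseChange R ((DistribMulAction.toAddMonoidHom M σ).toIntLinearMap) m} = ⊤

open Polynomial UniqueFactorizationMonoid in
lemma aux_mem_normalizedFactors {K : Type*} [Field K] [DecidableEq K] {q g : K[X]} (hq : Prime q)
    (hg : g ≠ 0) (h : q ∣ g) : normalize q ∈ normalizedFactors g := by
  have hle := (dvd_iff_normalizedFactors_le_normalizedFactors hq.ne_zero hg).mp h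
  have hqs : normalizedFactors q = {normalize q} :=
    normalizedFactors_irreducible hq.irreducible
  exact Multiset.mem_of_le hle (by rw [hqs]; exact Multiset.mem_singleton_self _)

open Polynomial UniqueFactorizationMonoid in
lemma aux_squarefree_dvd {K : Type*} [Field K] [DecidableEq K] {c g : K[X]} (hc : Squarefree c)
    (h : ∀ q : K[X], Prime q → q ∣ c → q ∣ g) (hg : g ≠ 0) : c ∣ g := by
  classical
  have hc0 : c ≠ 0 := hc.ne_zero
  rw [dvd_iff_normalizedFactors_le_normalizedFactors hc0 hg]
  have hnd : (normalizedFactors c).Nodup :=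
    (squarefree_iff_nodup_normalizedFactors hc0).mp hc
  refine Multiset.le_iff_count.mpr fun q => ?_
  by_cases hq : q ∈ normalizedFactors c
  · have hqp : Prime q := prime_of_normalized_factor q hq
    have hqg : q ∈ normalizedFactors g := by
      have := aux_mem_normalizedFactors hqp hg (h q hqp (dvd_of_mem_normalizedFactors hq))
      rwa [normalize_normalized_factor q hq] at this
    calc (normalizedFactors c).count q ≤ 1 :=
          (Multiset.nodup_iff_count_le_one.mp hnd) q
      _ ≤ (normalizedFactors g).count q := Multiset.one_le_count_iff_mem.mpr hqg
  · simp [Multiset.count_eq_zero_of_notMem hq]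

open Polynomial in
/-- A root of the characteristic polynomial is an eigenvalue. -/
lemma aux_hasEigenvalue_of_isRoot_charpoly {K V : Type*} [Field K] [AddCommGroup V]
    [Module K V] [FiniteDimensional K V] (f : Module.End K V) (t : K)
    (h : (LinearMap.charpoly f).IsRoot t) : f.HasEigenvalue t := by
  classical
  let b := Module.finBasis K V
  set A := LinearMap.toMatrix b b f with hA
  have hch : LinearMap.charpoly f = A.charpoly := (LinearMap.charpoly_toMatrix f b).symm
  have hdet : ((t • (1 : Matrix _ _ K)) - A).det = 0 := by
    have h1 : ((A.charmatrix).map (eval t)) = (t • (1 : Matrix _ _ K)) - A := by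
      ext i j
      by_cases hij : i = j
      · subst hij
        simp [Matrix.charmatrix_apply_eq, Matrix.one_apply, Matrix.smul_apply]
      · simp [Matrix.charmatrix_apply_ne _ _ _ hij, Matrix.one_apply, hij, Matrix.smul_apply,
          Matrix.sub_apply]
    have h2 : ((A.charmatrix).map (eval t)).det = (A.charpoly).eval t := by
      rw [Matrix.charpoly]
      exact (RingHom.map_det (evalRingHom t) (A.charmatrix)).symm
    rw [h1] at h2
    rw [h2, ← hch]
    exact h
  have hdet' : LinearMap.det ((t • (1 : Module.End K V)) - f) = 0 := by
    rw [← LinearMap.det_toMatrix b]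
    have : LinearMap.toMatrix b b ((t • (1 : Module.End K V)) - f)
        = (t • (1 : Matrix _ _ K)) - A := by
      rw [map_sub, map_smul]
      congr 1
      · congr 1
        exact LinearMap.toMatrix_one b
    rw [this, hdet]
  have hker : ⊥ < LinearMap.ker ((t • (1 : Module.End K V)) - f) :=
    LinearMap.bot_lt_ker_of_det_eq_zero hdet'
  obtain ⟨x, hx, hx0⟩ := (Submodule.ne_bot_iff _).mp hker.ne'
  have hfx : f x = t • x := by
    have h' : t • x - f x = 0 := by
      simpa [LinearMap.sub_apply, LinearMap.smul_apply] using LinearMap.mem_ker.mp hx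
    exact (sub_eq_zero.mp h').symm
  exact Module.End.hasEigenvalue_of_hasEigenvector
    ⟨Module.End.mem_eigenspace_iff.mpr hfx, hx0⟩


open Polynomial in
/-- The linear map `g ↦ (aeval f g) v`. -/
noncomputable def auxEval {K V : Type*} [Field K] [AddCommGroup V] [Module K V]
    (f : Module.End K V) (v : V) : K[X] →ₗ[K] V where
  toFun g := (aeval f g) v
  map_add' a b := by simp [map_add, LinearMap.add_apply]
  map_smul' c a := by simp [map_smul, LinearMap.smul_apply]

open Polynomial in
lemma auxEval_apply {K V : Type*} [Field K] [AddCommGroup V] [Module K V]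
    (f : Module.End K V) (v : V) (g : K[X]) : auxEval f v g = (aeval f g) v := rfl

open Polynomial in
lemma aux_aeval_mem_span {K V : Type*} [Field K] [AddCommGroup V] [Module K V]
    (f : Module.End K V) (v : V) (g : K[X]) :
    (aeval f g) v ∈ Submodule.span K {x : V | ∃ k : ℕ, x = (f ^ k) v} := by
  rw [Polynomial.aeval_eq_sum_range]
  simp only [LinearMap.coe_sum, Finset.sum_apply, LinearMap.smul_apply]
  exact Submodule.sum_mem _ fun i _ =>
    Submodule.smul_mem _ _ (Submodule.subset_span ⟨i, rfl⟩)

open Polynomial in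
/-- A cyclic endomorphism has minimal polynomial equal to its characteristic polynomial. -/
lemma aux_minpoly_eq_charpoly_of_cyclic {K V : Type*} [Field K] [AddCommGroup V] [Module K V]
    [FiniteDimensional K V] (f : Module.End K V) (v : V)
    (hv : Submodule.span K {x : V | ∃ k : ℕ, x = (f ^ k) v} = ⊤) :
    minpoly K f = LinearMap.charpoly f := by
  have hint : IsIntegral K f := IsIntegral.of_finite K f
  have hμ0 : minpoly K f ≠ 0 := minpoly.ne_zero hint
  have hμmon : (minpoly K f).Monic := minpoly.monic hint
  set μ := minpoly K f with hμ
  set d := μ.natDegree with hd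
  -- the image of polynomials of degree < d is everything
  set W := LinearMap.range ((auxEval f v).comp (degreeLT K d).subtype) with hW
  have hWtop : W = ⊤ := by
    rw [← top_le_iff, ← hv, Submodule.span_le]
    rintro x ⟨k, rfl⟩
    have hmem : (X ^ k %ₘ μ) ∈ degreeLT K d := by
      rw [Polynomial.mem_degreeLT]
      calc (X ^ k %ₘ μ).degree < μ.degree := degree_modByMonic_lt _ hμmon
        _ ≤ (d : WithBot ℕ) := by rw [degree_eq_natDegree hμ0]
    have hae : (aeval f (X ^ k %ₘ μ)) v = (f ^ k) v := by
      have h1 : (aeval f) (X ^ k %ₘ μ) = f ^ k := by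
        conv_rhs => rw [← aeval_X_pow (R := K) (x := f) (n := k), ← modByMonic_add_div (X ^ k) μ]
        rw [map_add, map_mul, minpoly.aeval K f, zero_mul, add_zero]
      rw [h1]
    exact ⟨⟨X ^ k %ₘ μ, hmem⟩, hae⟩
  have hfr : Module.finrank K V ≤ d := by
    haveI : Module.Finite K (degreeLT K d) :=
      Module.Finite.equiv (Polynomial.degreeLTEquiv K d).symm
    have h1 : Module.finrank K W ≤ Module.finrank K (degreeLT K d) :=
      LinearMap.finrank_range_le _
    have h2 : Module.finrank K (degreeLT K d) = d := by
      rw [(Polynomial.degreeLTEquiv K d).finrank_eq]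
      simp
    rw [hWtop, h2] at h1
    simpa using h1
  -- use divisibility
  have hdvd : μ ∣ LinearMap.charpoly f := LinearMap.minpoly_dvd_charpoly f
  obtain ⟨t, ht⟩ := hdvd
  have hc0 : LinearMap.charpoly f ≠ 0 := (LinearMap.charpoly_monic f).ne_zero
  have ht0 : t ≠ 0 := by rintro rfl; rw [mul_zero] at ht; exact hc0 ht
  have htmon : t.Monic := hμmon.of_mul_monic_left (by rw [← ht]; exact LinearMap.charpoly_monic f)
  have hdeg : (LinearMap.charpoly f).natDegree = d + t.natDegree := by
    rw [ht, Polynomial.natDegree_mul hμ0 ht0]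
  have hcd : (LinearMap.charpoly f).natDegree = Module.finrank K V :=
    LinearMap.charpoly_natDegree f
  have htd : t.natDegree = 0 := by omega
  have : t = 1 := htmon.natDegree_eq_zero.mp htd
  rw [ht, this, mul_one]

open Polynomial UniqueFactorizationMonoid in
/-- Existence of a cyclic vector when the minimal polynomial is squarefree and equals the
characteristic polynomial. -/
lemma aux_exists_cyclic {K V : Type*} [Field K] [AddCommGroup V] [Module K V]
    [FiniteDimensional K V] (f : Module.End K V)
    (hmin : minpoly K f = LinearMap.charpoly f) (hsq : Squarefree (minpoly K f)) :
    ∃ v : V, Submodule.span K {x : V | ∃ k : ℕ, x = (f ^ k) v} = ⊤ := by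
  classical
  have hint : IsIntegral K f := IsIntegral.of_finite K f
  have hμ0 : minpoly K f ≠ 0 := minpoly.ne_zero hint
  have hμmon : (minpoly K f).Monic := minpoly.monic hint
  set μ := minpoly K f with hμdef
  set s := (normalizedFactors μ).toFinset with hs
  -- basic facts about members of s
  have hsdvd : ∀ q ∈ s, q ∣ μ := fun q hq =>
    dvd_of_mem_normalizedFactors (Multiset.mem_toFinset.mp hq)
  have hsprime : ∀ q ∈ s, Prime q := fun q hq =>
    prime_of_normalized_factor q (Multiset.mem_toFinset.mp hq)
  -- the complementary divisor
  have hD : ∀ q ∈ s, μ = q * (μ /ₘ q) ∧ ¬ q ∣ (μ /ₘ q) := by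
    intro q hq
    obtain ⟨e, he⟩ := hsdvd q hq
    have hqmon : q.Monic := by
      have := normalize_normalized_factor q (Multiset.mem_toFinset.mp hq)
      rw [← this]
      exact monic_normalize (hsprime q hq).ne_zero
    have hdiv : μ /ₘ q = e := by
      rw [he]
      exact mul_divByMonic_cancel_left e hqmon
    constructor
    · rw [hdiv, ← he]
    · rw [hdiv]
      intro hqe
      obtain ⟨e', he'⟩ := hqe
      have : q * q ∣ μ := ⟨e', by rw [he, he', mul_assoc]⟩
      exact (hsprime q hq).not_unit (hsq q this)
  -- choose a nonzero kernel element for each q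
  have hexu : ∀ q ∈ s, ∃ u : V, u ≠ 0 ∧ (aeval f q) u = 0 := by
    intro q hq
    obtain ⟨hfac, -⟩ := hD q hq
    have hDne : (aeval f (μ /ₘ q)) ≠ 0 := by
      intro h0
      have hdvd2 : μ ∣ (μ /ₘ q) := minpoly.dvd K f h0
      have hD0 : (μ /ₘ q) ≠ 0 := by
        intro h
        rw [h, mul_zero] at hfac
        exact hμ0 hfac
      have h1 : μ.natDegree ≤ (μ /ₘ q).natDegree :=
        Polynomial.natDegree_le_natDegree (Polynomial.degree_le_of_dvd hdvd2 hD0)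
      have h2 : μ.natDegree = q.natDegree + (μ /ₘ q).natDegree := by
        conv_lhs => rw [hfac]
        exact Polynomial.natDegree_mul (hsprime q hq).ne_zero hD0
      have h3 : 0 < q.natDegree :=
        (hsprime q hq).irreducible.natDegree_pos
      omega
    obtain ⟨w, hw⟩ := DFunLike.ne_iff.mp hDne
    refine ⟨(aeval f (μ /ₘ q)) w, by simpa using hw, ?_⟩
    have : (aeval f q) ((aeval f (μ /ₘ q)) w) = (aeval f μ) w := by
      rw [← Module.End.mul_apply, ← map_mul, ← hfac]
    rw [this, minpoly.aeval K f]
    simp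
  -- the chosen elements
  let u : K[X] → V := fun q =>
    if h : q ∈ s then (hexu q h).choose else 0
  have hu0 : ∀ q ∈ s, u q ≠ 0 := fun q hq => by
    simp only [u, dif_pos hq]; exact (hexu q hq).choose_spec.1
  have huq : ∀ q ∈ s, (aeval f q) (u q) = 0 := fun q hq => by
    simp only [u, dif_pos hq]; exact (hexu q hq).choose_spec.2
  set v := ∑ q ∈ s, u q with hv
  -- the complementary divisor kills all other summands
  have hkill : ∀ q ∈ s, ∀ q' ∈ s, q' ≠ q → (aeval f (μ /ₘ q)) (u q') = 0 := by
    intro q hq q' hq' hne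
    have hq'D : q' ∣ (μ /ₘ q) := by
      have h1 : q' ∣ q * (μ /ₘ q) := by rw [← (hD q hq).1]; exact hsdvd q' hq'
      rcases (hsprime q' hq').2.2 _ _ h1 with h | h
      · exfalso
        have hass : Associated q' q :=
          (hsprime q' hq').irreducible.associated_of_dvd (hsprime q hq).irreducible h
        have : normalize q' = normalize q := normalize_eq_normalize hass.dvd hass.symm.dvd
        rw [normalize_normalized_factor q' (Multiset.mem_toFinset.mp hq'),
          normalize_normalized_factor q (Multiset.mem_toFinset.mp hq)] at this
        exact hne this
      · exact h
    obtain ⟨e, he⟩ := hq'D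
    rw [he, mul_comm, map_mul, Module.End.mul_apply, huq q' hq', map_zero]
  have hDv : ∀ q ∈ s, (aeval f (μ /ₘ q)) v = (aeval f (μ /ₘ q)) (u q) := by
    intro q hq
    rw [hv, map_sum]
    exact Finset.sum_eq_single_of_mem q hq fun q' hq' hne => hkill q hq q' hq' hne
  -- key annihilator property
  have hann : ∀ g : K[X], (aeval f g) v = 0 → μ ∣ g := by
    intro g hg
    rcases eq_or_ne g 0 with rfl | hg0
    · exact dvd_zero μ
    refine aux_squarefree_dvd hsq (fun q₀ hq₀ hq₀μ => ?_) hg0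
    rw [← normalize_dvd_iff]
    set q := normalize q₀ with hqdef
    have hqs : q ∈ s := Multiset.mem_toFinset.mpr (aux_mem_normalizedFactors hq₀ hμ0 hq₀μ)
    -- g kills u q
    have hcop : IsCoprime q (μ /ₘ q) :=
      (hsprime q hqs).irreducible.coprime_iff_not_dvd.mpr (hD q hqs).2
    obtain ⟨a, b, hab⟩ := hcop
    have hbD : (aeval f (b * (μ /ₘ q))) (u q) = u q := by
      have h1 : b * (μ /ₘ q) = 1 - a * q := by
        rw [eq_sub_iff_add_eq, add_comm]; exact hab
      rw [h1, map_sub, map_one, LinearMap.sub_apply, Module.End.one_apply,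
        map_mul, Module.End.mul_apply, huq q hqs, map_zero, sub_zero]
    have huqv : u q = (aeval f (b * (μ /ₘ q))) v := by
      rw [map_mul, Module.End.mul_apply, hDv q hqs, ← Module.End.mul_apply, ← map_mul, hbD]
    have hguq : (aeval f g) (u q) = 0 := by
      rw [huqv, ← Module.End.mul_apply, ← map_mul, mul_comm, map_mul,
        Module.End.mul_apply, hg, map_zero]
    -- hence q divides g
    by_contra hqg
    have hcop2 : IsCoprime q g :=
      (hsprime q hqs).irreducible.coprime_iff_not_dvd.mpr hqg
    obtain ⟨a', b', hab'⟩ := hcop2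
    have : u q = 0 := by
      have h1 : (aeval f (a' * q + b' * g)) (u q) = u q := by
        rw [hab', map_one, Module.End.one_apply]
      rw [map_add, LinearMap.add_apply, map_mul, Module.End.mul_apply, huq q hqs,
        map_zero, map_mul, Module.End.mul_apply, hguq, map_zero, add_zero] at h1
      exact h1.symm
    exact hu0 q hqs this
  -- now the span of the orbit of v is everything
  refine ⟨v, ?_⟩
  set W := Submodule.span K {x : V | ∃ k : ℕ, x = (f ^ k) v} with hW
  set d := μ.natDegree with hd
  have hrange : ∀ g : degreeLT K d, auxEval f v (g : K[X]) ∈ W :=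
    fun g => aux_aeval_mem_span f v g
  let φ : degreeLT K d →ₗ[K] W :=
    LinearMap.codRestrict W ((auxEval f v).comp (degreeLT K d).subtype) hrange
  have hinj : Function.Injective φ := by
    rw [← LinearMap.ker_eq_bot]
    rw [LinearMap.ker_eq_bot']
    rintro ⟨g, hg⟩ hφ
    have hg0 : (aeval f g) v = 0 := by
      have := congrArg (Subtype.val) hφ
      exact this
    have hdvd : μ ∣ g := hann g hg0
    have : g = 0 := by
      by_contra hne
      have h1 : μ.degree ≤ g.degree := Polynomial.degree_le_of_dvd hdvd hne
      have h2 : g.degree < (d : WithBot ℕ) := Polynomial.mem_degreeLT.mp hg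
      rw [degree_eq_natDegree hμ0] at h1
      exact absurd (lt_of_le_of_lt h1 h2) (lt_irrefl _)
    simpa using this
  have hdim : d ≤ Module.finrank K W := by
    have h1 : Module.finrank K (degreeLT K d) ≤ Module.finrank K W :=
      LinearMap.finrank_le_finrank_of_injective hinj
    have h2 : Module.finrank K (degreeLT K d) = d := by
      rw [(Polynomial.degreeLTEquiv K d).finrank_eq]
      simp
    omega
  have hfr : Module.finrank K V = d := by
    have h := LinearMap.charpoly_natDegree f
    rw [← hmin] at h
    exact h.symm
  refine Submodule.eq_top_of_finrank_eq ?_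
  have hle : Module.finrank K W ≤ Module.finrank K V := Submodule.finrank_le W
  omega


open Polynomial in
/-- If the characteristic polynomial is squarefree, it equals the minimal polynomial. -/
lemma aux_minpoly_eq_charpoly_of_squarefree {K V : Type*} [Field K] [AddCommGroup V]
    [Module K V] [FiniteDimensional K V] (f : Module.End K V)
    (hsq : Squarefree (LinearMap.charpoly f)) : minpoly K f = LinearMap.charpoly f := by
  classical
  have hint : IsIntegral K f := IsIntegral.of_finite K f
  have h1 : minpoly K f ∣ LinearMap.charpoly f := LinearMap.minpoly_dvd_charpoly f
  have h2 : LinearMap.charpoly f ∣ minpoly K f := by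
    refine aux_squarefree_dvd hsq (fun q hq hqc => ?_) (minpoly.ne_zero hint)
    by_contra hnd
    have hcop : IsCoprime q (minpoly K f) := hq.irreducible.coprime_iff_not_dvd.mpr hnd
    set L := AlgebraicClosure K
    set f' := f.baseChange L with hf'
    have hch : LinearMap.charpoly f' = (LinearMap.charpoly f).map (algebraMap K L) :=
      LinearMap.charpoly_baseChange f L
    have hqdeg : (q.map (algebraMap K L)).degree ≠ 0 := by
      rw [Polynomial.degree_map]
      exact (Polynomial.natDegree_pos_iff_degree_pos.mp hq.irreducible.natDegree_pos).ne'
    obtain ⟨t, ht⟩ := IsAlgClosed.exists_root (q.map (algebraMap K L)) hqdeg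
    have hroot_c : ((LinearMap.charpoly f).map (algebraMap K L)).eval t = 0 := by
      obtain ⟨c₂, hc₂⟩ := Polynomial.map_dvd (algebraMap K L) hqc
      rw [hc₂, Polynomial.eval_mul, ht, zero_mul]
    have hev : Module.End.HasEigenvalue f' t := by
      refine aux_hasEigenvalue_of_isRoot_charpoly f' t ?_
      rw [hch]; exact hroot_c
    have hroot_min : (minpoly L f').IsRoot t := Module.End.isRoot_of_hasEigenvalue hev
    have hdvd' : minpoly L f' ∣ (minpoly K f).map (algebraMap K L) := by
      refine minpoly.dvd L f' ?_
      rw [Polynomial.aeval_map_algebraMap]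
      have heq := Polynomial.aeval_algHom_apply
        (Module.End.baseChangeHom (R := K) (A := L) (M := V)) f (minpoly K f)
      rw [show (Module.End.baseChangeHom (R := K) (A := L) (M := V)) f = f' from rfl] at heq
      rw [heq, minpoly.aeval K f, map_zero]
    have hroot_min2 : ((minpoly K f).map (algebraMap K L)).eval t = 0 := by
      obtain ⟨e, he⟩ := hdvd'
      rw [he, Polynomial.eval_mul, hroot_min, zero_mul]
    obtain ⟨a, b, hab⟩ := hcop
    have := congrArg (fun r : K[X] => (r.map (algebraMap K L)).eval t) hab
    simp only [Polynomial.map_add, Polynomial.map_mul, Polynomial.map_one, Polynomial.eval_add,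
      Polynomial.eval_mul, Polynomial.eval_one] at this
    have ht0 : Polynomial.eval t (q.map (algebraMap K L)) = 0 := ht
    rw [ht0, hroot_min2] at this
    simp at this
  exact Polynomial.eq_of_monic_of_associated (minpoly.monic hint) (LinearMap.charpoly_monic f)
    (associated_of_dvd_dvd h1 h2)

/-- Let `G` be a finite cyclic group of order `n` generated by `σ`, `p` an odd prime with
`p ∤ n`, and `M` a free `ℤ`-module of finite rank with a `G`-action possessing an element `m`
with `[M : ℤ[G]·m] < ∞`.  Then `M/pM` (that is, `M ⊗ 𝔽_p`) is a cyclic `𝔽_p[G]`-module. -/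
theorem stmt_1 (G : Type*) [CommGroup G] [Fintype G] (n : ℕ) (hn : Fintype.card G = n)
    (σ : G) (hσ : ∀ g : G, g ∈ Subgroup.zpowers σ)
    (p : ℕ) [Fact p.Prime] (hodd : p ≠ 2) (hp : ¬ p ∣ n)
    (M : Type*) [AddCommGroup M] [Module.Free ℤ M] [Module.Finite ℤ M]
    [DistribMulAction G M]
    (hfin : ∃ m : M,
      (Submodule.span ℤ (Set.range fun g : G => g • m)).toAddSubgroup.index ≠ 0) :
    IsCyclicGroupRingModule (ZMod p) G M := by
  classical
  open Polynomial in
  -- the action as integer-linear maps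
  set L : G → (M →ₗ[ℤ] M) := fun g => (DistribMulAction.toAddMonoidHom M g).toIntLinearMap
    with hLdef
  have hLapp : ∀ (g : G) (x : M), L g x = g • x := fun g x => rfl
  have hLone : L 1 = LinearMap.id := by
    ext x; simp [hLapp]
  have hLmul : ∀ g h : G, L (g * h) = L g ∘ₗ L h := by
    intro g h; ext x; simp [hLapp, mul_smul]
  have hLpow : ∀ k : ℕ, L (σ ^ k) = (L σ) ^ k := by
    intro k
    induction k with
    | zero => rw [pow_zero, pow_zero, hLone]; rfl
    | succ k ih =>
      rw [pow_succ, pow_succ, hLmul, ih]; rfl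
  have hn0 : n ≠ 0 := fun h => hp (h ▸ dvd_zero p)
  have hσn : ∀ g : G, ∃ k : ℕ, σ ^ k = g := fun g =>
    mem_powers_iff_mem_zpowers.mpr (hσ g)
  -- the rational side: cyclicity
  set fQ : Module.End ℚ (ℚ ⊗[ℤ] M) := LinearMap.baseChange ℚ (L σ) with hfQ
  have hfQpow : ∀ k : ℕ, LinearMap.baseChange ℚ (L (σ ^ k)) = fQ ^ k := fun k => by
    rw [hLpow]; exact LinearMap.baseChange_pow (R := ℤ) (A := ℚ) (M := M) (L σ) k
  obtain ⟨m, hm⟩ := hfin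
  have hcyc : Submodule.span ℚ
      {x : ℚ ⊗[ℤ] M | ∃ k : ℕ, x = (fQ ^ k) ((1 : ℚ) ⊗ₜ[ℤ] m)} = ⊤ := by
    set W := Submodule.span ℚ {x : ℚ ⊗[ℤ] M | ∃ k : ℕ, x = (fQ ^ k) ((1 : ℚ) ⊗ₜ[ℤ] m)}
      with hWdef
    rw [eq_top_iff]
    have horb : ∀ g : G, ((1 : ℚ) ⊗ₜ[ℤ] (g • m)) ∈ W := by
      intro g
      obtain ⟨k, hk⟩ := hσn g
      have h1 : (1 : ℚ) ⊗ₜ[ℤ] (g • m) = (fQ ^ k) ((1 : ℚ) ⊗ₜ[ℤ] m) := by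
        rw [← hfQpow, LinearMap.baseChange_tmul, hk, hLapp]
      rw [h1]
      exact Submodule.subset_span ⟨k, rfl⟩
    have hN : ∀ z ∈ Submodule.span ℤ (Set.range fun g : G => g • m),
        ((1 : ℚ) ⊗ₜ[ℤ] z) ∈ W := by
      intro z hz
      induction hz using Submodule.span_induction with
      | mem x hx => obtain ⟨g, rfl⟩ := hx; exact horb g
      | zero => rw [TensorProduct.tmul_zero]; exact W.zero_mem
      | add a b _ _ ha hb => rw [TensorProduct.tmul_add]; exact W.add_mem ha hb
      | smul c a _ ha =>
        rw [TensorProduct.tmul_smul]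
        exact Submodule.smul_of_tower_mem W c ha
    have hone : ∀ y : M, ((1 : ℚ) ⊗ₜ[ℤ] y) ∈ W := by
      intro y
      set e := (Submodule.span ℤ (Set.range fun g : G => g • m)).toAddSubgroup.index with he
      have hey : e • y ∈ (Submodule.span ℤ (Set.range fun g : G => g • m)).toAddSubgroup :=
        AddSubgroup.nsmul_index_mem _ y
      have h1 : ((1 : ℚ) ⊗ₜ[ℤ] (e • y)) ∈ W := hN _ hey
      have h2 : ((1 : ℚ) ⊗ₜ[ℤ] (e • y)) = (e : ℚ) • ((1 : ℚ) ⊗ₜ[ℤ] y) := by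
        rw [TensorProduct.tmul_smul, Nat.cast_smul_eq_nsmul ℚ]
      rw [h2] at h1
      have h3 := W.smul_mem ((e : ℚ)⁻¹) h1
      rwa [smul_smul, inv_mul_cancel₀ (by exact_mod_cast hm), one_smul] at h3
    rintro x -
    induction x using TensorProduct.induction_on with
    | zero => exact W.zero_mem
    | tmul q y =>
      have : q ⊗ₜ[ℤ] y = q • ((1 : ℚ) ⊗ₜ[ℤ] y) := by
        rw [TensorProduct.smul_tmul', smul_eq_mul, mul_one]
      rw [this]
      exact W.smul_mem q (hone y)
    | add a b ha hb => exact W.add_mem ha hb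
  -- minpoly = charpoly over ℚ, hence the integral charpoly divides Xⁿ - 1
  have hminQ : minpoly ℚ fQ = LinearMap.charpoly fQ :=
    aux_minpoly_eq_charpoly_of_cyclic fQ _ hcyc
  have hfQn : fQ ^ n = 1 := by
    rw [← hfQpow n]
    have h1 : σ ^ n = 1 := by rw [← hn]; exact pow_card_eq_one
    rw [h1, hLone, LinearMap.baseChange_id]
    rfl
  have hdvdQ : LinearMap.charpoly fQ ∣ (X ^ n - 1 : ℚ[X]) := by
    rw [← hminQ]
    refine minpoly.dvd ℚ fQ ?_
    rw [map_sub, map_one, map_pow, aeval_X, hfQn, sub_self]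
  have hchQ : LinearMap.charpoly fQ = (LinearMap.charpoly (L σ)).map (algebraMap ℤ ℚ) :=
    LinearMap.charpoly_baseChange (L σ) ℚ
  have hdvdZ : LinearMap.charpoly (L σ) ∣ (X ^ n - 1 : ℤ[X]) := by
    have hmonX : (X ^ n - 1 : ℤ[X]).Monic := by
      simpa using Polynomial.monic_X_pow_sub_C (1 : ℤ) hn0
    rw [← Polynomial.Monic.dvd_iff_fraction_map_dvd_fraction_map (K := ℚ) hmonX
      (LinearMap.charpoly_monic _)]
    have hmap : (X ^ n - 1 : ℤ[X]).map (algebraMap ℤ ℚ) = X ^ n - 1 := by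
      simp
    rw [hmap, ← hchQ]
    exact hdvdQ
  -- now mod p
  set fP : Module.End (ZMod p) ((ZMod p) ⊗[ℤ] M) := LinearMap.baseChange (ZMod p) (L σ)
    with hfP
  have hchP : LinearMap.charpoly fP
      = (LinearMap.charpoly (L σ)).map (algebraMap ℤ (ZMod p)) :=
    LinearMap.charpoly_baseChange (L σ) (ZMod p)
  have hdvdP : LinearMap.charpoly fP ∣ (X ^ n - 1 : (ZMod p)[X]) := by
    rw [hchP]
    have h1 := Polynomial.map_dvd (algebraMap ℤ (ZMod p)) hdvdZ
    have hmap : (X ^ n - 1 : ℤ[X]).map (algebraMap ℤ (ZMod p)) = X ^ n - 1 := by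
      simp
    rwa [hmap] at h1
  have hsqX : Squarefree (X ^ n - 1 : (ZMod p)[X]) := by
    have hn0' : ((n : ZMod p)) ≠ 0 := by
      intro h
      exact hp ((ZMod.natCast_eq_zero_iff n p).mp h)
    have hsep : (X ^ n - C (1 : ZMod p)).Separable :=
      Polynomial.separable_X_pow_sub_C 1 hn0' one_ne_zero
    have := hsep.squarefree
    simpa using this
  have hsqP : Squarefree (LinearMap.charpoly fP) :=
    Squarefree.squarefree_of_dvd hdvdP hsqX
  have hminP : minpoly (ZMod p) fP = LinearMap.charpoly fP :=
    aux_minpoly_eq_charpoly_of_squarefree fP hsqP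
  obtain ⟨v, hv⟩ := aux_exists_cyclic fP hminP (hminP ▸ hsqP)
  refine ⟨v, ?_⟩
  have hset : {x : (ZMod p) ⊗[ℤ] M | ∃ σ' : G,
      x = LinearMap.baseChange (ZMod p)
        ((DistribMulAction.toAddMonoidHom M σ').toIntLinearMap) v}
      = {x : (ZMod p) ⊗[ℤ] M | ∃ k : ℕ, x = (fP ^ k) v} := by
    ext x
    constructor
    · rintro ⟨g, rfl⟩
      obtain ⟨k, hk⟩ := hσn g
      refine ⟨k, ?_⟩
      rw [show (DistribMulAction.toAddMonoidHom M g).toIntLinearMap = L g from rfl,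
        ← hk, hLpow, LinearMap.baseChange_pow]
    · rintro ⟨k, rfl⟩
      refine ⟨σ ^ k, ?_⟩
      rw [show (DistribMulAction.toAddMonoidHom M (σ ^ k)).toIntLinearMap = L (σ ^ k) from rfl,
        hLpow, LinearMap.baseChange_pow]
  rw [hset]
  exact hv
end

section
/- Let $\chi$ be a nontrivial Dirichlet character of conductor $f_\chi$, viewed as a character of $(\mathbb{Z}/f)^\times$ for some multiple $f$ of $f_\chi$, with values in $\mathbb{C}_p$. Then $\sum_{\substack{a=1 \\ (a,f)=1}}^{f} \log_p(1 - \zeta_f^a)\,\overline{\chi}(a) = \prod_{\ell \mid f}(1 - \overline{\chi}(\ell)) \cdot \sum_{a=1}^{f_\chi} \log_p(1 - \zeta_{f_\chi}^a)\,\overline{\chi}(a)$, where $\log_p$ is the Iwasawa $p$-adic logarithm and the product is over primes $\ell$ dividing $f$. -/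
open Finset

section Aux

variable {K : Type*} [Field K]

private lemma lg_one_aux {lg : K → K}
    (hlg : ∀ x y : K, x ≠ 0 → y ≠ 0 → lg (x * y) = lg x + lg y) : lg 1 = 0 := by
  have h := hlg 1 1 one_ne_zero one_ne_zero
  rw [mul_one] at h
  exact (left_eq_add.mp h)

private lemma lg_prod_aux {lg : K → K}
    (hlg : ∀ x y : K, x ≠ 0 → y ≠ 0 → lg (x * y) = lg x + lg y)
    {ι : Type*} {s : Finset ι} {g : ι → K} (hg : ∀ i ∈ s, g i ≠ 0) :
    lg (∏ i ∈ s, g i) = ∑ i ∈ s, lg (g i) := by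
  classical
  induction s using Finset.cons_induction with
  | empty => simpa using lg_one_aux hlg
  | cons a s ha ih =>
    have h1 : g a ≠ 0 := hg a (Finset.mem_cons_self a s)
    have h2 : ∀ i ∈ s, g i ≠ 0 := fun i hi => hg i (Finset.mem_cons.mpr (Or.inr hi))
    rw [Finset.prod_cons, Finset.sum_cons,
      hlg _ _ h1 (Finset.prod_ne_zero_iff.mpr h2), ih h2]

private lemma prod_one_sub_mul_pow {η : K} {k : ℕ} (hk : 0 < k)
    (hη : IsPrimitiveRoot η k) (x : K) :
    ∏ j ∈ Finset.range k, (1 - η ^ j * x) = 1 - x ^ k := by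
  haveI : NeZero k := ⟨hk.ne'⟩
  have h1 : (1 : K) - x ^ k = 1 ^ k - x ^ k := by rw [one_pow]
  rw [h1, IsPrimitiveRoot.pow_sub_pow_eq_prod_sub_mul (1 : K) x hk hη]
  refine Finset.prod_bij (fun j _ => η ^ j) ?_ ?_ ?_ ?_
  · intro j _
    exact (Polynomial.mem_nthRootsFinset hk (1 : K)).mpr
      (by rw [← pow_mul, mul_comm, pow_mul, hη.pow_eq_one, one_pow])
  · intro i hi j hj h
    exact hη.pow_inj (Finset.mem_range.mp hi) (Finset.mem_range.mp hj) h
  · intro b hb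
    obtain ⟨i, hik, hib⟩ := hη.eq_pow_of_pow_eq_one ((Polynomial.mem_nthRootsFinset hk (1 : K)).mp hb)
    exact ⟨i, Finset.mem_range.mpr hik, hib⟩
  · intro j _; rfl

private lemma sum_moebius_cast (n : ℕ) :
    ∑ d ∈ n.divisors, ((ArithmeticFunction.moebius d : ℤ) : K) = if n = 1 then 1 else 0 := by
  have h := congrArg (fun F : ArithmeticFunction ℤ => F n)
    ArithmeticFunction.moebius_mul_coe_zeta
  simp only [ArithmeticFunction.coe_mul_zeta_apply, ArithmeticFunction.one_apply] at h
  rw [← Int.cast_sum, h]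
  split_ifs <;> simp

private lemma moebius_sum_eq_prod (g : ℕ →* K) {n : ℕ} (hn : n ≠ 0) :
    ∑ d ∈ n.divisors, ((ArithmeticFunction.moebius d : ℤ) : K) * g d
      = ∏ p ∈ n.primeFactors, (1 - g p) := by
  classical
  rw [← Finset.sum_filter_add_sum_filter_not n.divisors Squarefree]
  have hzero : ∑ d ∈ n.divisors.filter (fun d => ¬ Squarefree d),
      ((ArithmeticFunction.moebius d : ℤ) : K) * g d = 0 :=
    Finset.sum_eq_zero (fun d hd => by
      rw [ArithmeticFunction.moebius_eq_zero_of_not_squarefree (Finset.mem_filter.mp hd).2]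
      simp)
  rw [hzero, add_zero]
  rw [Nat.sum_divisors_filter_squarefree hn]
  have hfac : (UniqueFactorizationMonoid.normalizedFactors n).toFinset = n.primeFactors := by
    rw [Nat.factors_eq]
    simp
  rw [hfac]
  have key : ∀ t ∈ n.primeFactors.powerset,
      ((ArithmeticFunction.moebius (t.val.prod) : ℤ) : K) * g t.val.prod
        = ∏ p ∈ t, (-g p) := by
    intro t ht
    have ht' := Finset.mem_powerset.mp ht
    have htp : t.val.prod = ∏ p ∈ t, p := by
      rw [Finset.prod_val]
      simp
    rw [htp]
    rw [ArithmeticFunction.IsMultiplicative.map_prod_of_subset_primeFactors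
        ArithmeticFunction.isMultiplicative_moebius n t ht', map_prod]
    rw [Int.cast_prod, ← Finset.prod_mul_distrib]
    refine Finset.prod_congr rfl fun p hp => ?_
    rw [ArithmeticFunction.moebius_apply_prime (Nat.prime_of_mem_primeFactors (ht' hp))]
    push_cast
    ring
  rw [Finset.sum_congr rfl key]
  have hpa := Finset.prod_add (fun p => -g p) (fun _ => (1 : K)) n.primeFactors
  simp only [Finset.prod_const_one, mul_one] at hpa
  rw [← hpa]
  exact Finset.prod_congr rfl fun p _ => by ring

private lemma zmod_sum_range {M : Type*} [AddCommMonoid M] (n : ℕ) [NeZero n] (F : ZMod n → M) :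
    ∑ a : ZMod n, F a = ∑ a ∈ Finset.range n, F (a : ZMod n) := by
  refine Finset.sum_nbij' (fun a : ZMod n => a.val) (fun a : ℕ => (a : ZMod n))
    ?_ ?_ ?_ ?_ ?_
  · intro a _
    exact Finset.mem_range.mpr (ZMod.val_lt a)
  · intro a _
    exact Finset.mem_univ _
  · intro a _
    exact ZMod.natCast_rightInverse a
  · intro a ha
    exact ZMod.val_cast_of_lt (Finset.mem_range.mp ha)
  · intro a _
    rw [ZMod.natCast_rightInverse a]

end Aux

/-- Conductor-lowering identity for twisted sums of `p`-adic logarithms of cyclotomic numbers: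
for a nontrivial Dirichlet character `χ` mod `f` of conductor `f₀`, and any "logarithm"
`lg` (a homomorphism from nonzero elements, modelling the Iwasawa `log_p`),
`∑_{(a,f)=1} lg(1-ζ_f^a) χ̄(a) = ∏_{ℓ ∣ f} (1 - χ̄₀(ℓ)) · ∑_a lg(1-ζ_{f₀}^a) χ̄₀(a)`,
where `χ̄ = χ⁻¹` (complex conjugation on root-of-unity values) and `χ̄₀` is the primitive
character attached to `χ`. -/
theorem stmt_16 (K : Type*) [Field K] [CharZero K]
    (f : ℕ) [NeZero f] (hf : 1 < f)
    (χ : DirichletCharacter K f) (hχ : χ ≠ 1) [NeZero χ.conductor]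
    (ζ : K) (hζ : IsPrimitiveRoot ζ f)
    (lg : K → K) (hlg : ∀ x y : K, x ≠ 0 → y ≠ 0 → lg (x * y) = lg x + lg y) :
    ∑ a : ZMod f, (χ⁻¹ a) * lg (1 - ζ ^ a.val)
      = (∏ ℓ ∈ f.primeFactors, (1 - (χ.primitiveCharacter)⁻¹ (ℓ : ZMod χ.conductor))) *
        ∑ a : ZMod χ.conductor,
          ((χ.primitiveCharacter)⁻¹ a) * lg (1 - ζ ^ (f / χ.conductor * a.val)) := by
  classical
  set f₀ := χ.conductor with hf₀def
  set χ₀ := χ.primitiveCharacter with hχ₀def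
  have hd₀ : f₀ ∣ f := χ.conductor_dvd_level
  have hf0 : f ≠ 0 := NeZero.ne f
  have hf₀0 : f₀ ≠ 0 := NeZero.ne _
  have hf₀1 : f₀ ≠ 1 := fun h =>
    hχ ((DirichletCharacter.eq_one_iff_conductor_eq_one).mpr h)
  have hfact : χ = DirichletCharacter.changeLevel hd₀ χ₀ :=
    (χ.factorsThrough_conductor).choose_spec.choose_spec
  -- the "extended conjugate character" on ℕ
  set G : ℕ → K := fun n => (χ₀⁻¹ : MulChar (ZMod f₀) K) ((n : ZMod f₀)) with hGdef
  have hG1 : G 1 = 1 := by simp [hGdef]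
  have hGmul : ∀ m n : ℕ, G (m * n) = G m * G n := by
    intro m n
    simp only [hGdef, Nat.cast_mul, map_mul]
  have hG0 : ∀ n : ℕ, ¬ Nat.Coprime n f₀ → G n = 0 := by
    intro n hn
    exact MulChar.map_nonunit _ (fun hu => hn ((ZMod.isUnit_iff_coprime n f₀).mp hu))
  have hGcop : ∀ n : ℕ, G n ≠ 0 → Nat.Coprime n f₀ := by
    intro n hn
    by_contra h
    exact hn (hG0 n h)
  -- the target sum at the conductor level
  set T : K := ∑ c ∈ Finset.range f₀, G c * lg (1 - ζ ^ (f / f₀ * c)) with hTdef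
  -- Step A : rewrite both `ZMod` sums as sums over ranges
  have hLHS : ∑ a : ZMod f, (χ⁻¹ a) * lg (1 - ζ ^ a.val)
      = ∑ a ∈ Finset.range f, (χ⁻¹ ((a : ZMod f))) * lg (1 - ζ ^ a) := by
    rw [zmod_sum_range f (fun a : ZMod f => (χ⁻¹ a) * lg (1 - ζ ^ a.val))]
    exact Finset.sum_congr rfl fun a ha => by
      rw [ZMod.val_cast_of_lt (Finset.mem_range.mp ha)]
  have hRHS : ∑ a : ZMod f₀, (χ₀⁻¹ a) * lg (1 - ζ ^ (f / f₀ * a.val)) = T := by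
    rw [zmod_sum_range f₀ (fun a : ZMod f₀ => (χ₀⁻¹ a) * lg (1 - ζ ^ (f / f₀ * a.val)))]
    exact Finset.sum_congr rfl fun a ha => by
      rw [ZMod.val_cast_of_lt (Finset.mem_range.mp ha)]
  -- Step B : value of `χ⁻¹` in terms of `G` and a coprimality indicator
  have hval : ∀ a : ℕ, (χ⁻¹ : DirichletCharacter K f) ((a : ZMod f))
      = (if Nat.gcd a f = 1 then (1 : K) else 0) * G a := by
    intro a
    by_cases h : Nat.gcd a f = 1
    · rw [if_pos h, one_mul]
      have hu : IsUnit ((a : ℕ) : ZMod f) := (ZMod.isUnit_iff_coprime a f).mpr h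
      show (χ⁻¹ : DirichletCharacter K f) ((a : ZMod f)) = χ₀⁻¹ ((a : ZMod f₀))
      rw [MulChar.inv_apply_eq_inv', MulChar.inv_apply_eq_inv']
      congr 1
      conv_lhs => rw [hfact]
      rw [← hu.unit_spec, DirichletCharacter.changeLevel_eq_cast_of_dvd χ₀ hd₀ hu.unit,
        hu.unit_spec, ZMod.cast_natCast hd₀]
    · rw [if_neg h, zero_mul]
      exact MulChar.map_nonunit _ (fun hu => h ((ZMod.isUnit_iff_coprime a f).mp hu))
  -- Step C : Möbius sieve
  have hsieve : ∑ a ∈ Finset.range f, (χ⁻¹ ((a : ZMod f))) * lg (1 - ζ ^ a)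
      = ∑ d ∈ f.divisors, ((ArithmeticFunction.moebius d : ℤ) : K) *
          ∑ b ∈ Finset.range (f / d), G (d * b) * lg (1 - ζ ^ (d * b)) := by
    have h1 : ∀ a ∈ Finset.range f, (χ⁻¹ ((a : ZMod f))) * lg (1 - ζ ^ a)
        = ∑ d ∈ (Nat.gcd a f).divisors,
            ((ArithmeticFunction.moebius d : ℤ) : K) * (G a * lg (1 - ζ ^ a)) := by
      intro a _
      rw [hval a, ← sum_moebius_cast (K := K) (Nat.gcd a f)]
      rw [Finset.sum_mul, Finset.sum_mul]
      exact Finset.sum_congr rfl fun d _ => by ring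
    rw [Finset.sum_congr rfl h1]
    rw [Finset.sum_comm' (s := Finset.range f) (t := fun a => (Nat.gcd a f).divisors)
      (t' := f.divisors) (s' := fun d => (Finset.range f).filter (fun a => d ∣ a))
      (by
        intro a d
        simp only [Finset.mem_range, Nat.mem_divisors, Finset.mem_filter]
        constructor
        · rintro ⟨haf, hd, _⟩
          exact ⟨⟨haf, (Nat.dvd_gcd_iff.mp hd).1⟩, (Nat.dvd_gcd_iff.mp hd).2, hf0⟩
        · rintro ⟨⟨haf, hda⟩, hdf, _⟩
          exact ⟨haf, Nat.dvd_gcd hda hdf, Nat.gcd_ne_zero_right hf0⟩)]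
    refine Finset.sum_congr rfl fun d hd => ?_
    have hdvd : d ∣ f := (Nat.mem_divisors.mp hd).1
    have hd0 : d ≠ 0 := (Nat.pos_of_mem_divisors hd).ne'
    rw [← Finset.mul_sum]
    congr 1
    refine Finset.sum_nbij' (fun a => a / d) (fun b => d * b) ?_ ?_ ?_ ?_ ?_
    · intro a ha
      obtain ⟨haf, hda⟩ := Finset.mem_filter.mp ha
      exact Finset.mem_range.mpr (Nat.div_lt_div_of_lt_of_dvd hdvd (Finset.mem_range.mp haf))
    · intro b hb
      refine Finset.mem_filter.mpr ⟨Finset.mem_range.mpr ?_, Dvd.intro b rfl⟩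
      calc d * b < d * (f / d) :=
            (Nat.mul_lt_mul_left (Nat.pos_of_ne_zero hd0)).mpr (Finset.mem_range.mp hb)
        _ = f := Nat.mul_div_cancel' hdvd
    · intro a ha
      exact Nat.mul_div_cancel' (Finset.mem_filter.mp ha).2
    · intro b _
      exact Nat.mul_div_cancel_left b (Nat.pos_of_ne_zero hd0)
    · intro a ha
      rw [Nat.mul_div_cancel' (Finset.mem_filter.mp ha).2]
  -- Step D : distribution relation
  have hdist : ∀ d ∈ f.divisors, G d ≠ 0 →
      ∑ b ∈ Finset.range (f / d), G b * lg (1 - ζ ^ (d * b)) = T := by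
    intro d hd hGd
    have hdvd : d ∣ f := (Nat.mem_divisors.mp hd).1
    have hd0 : d ≠ 0 := (Nat.pos_of_mem_divisors hd).ne'
    have hcop : Nat.Coprime d f₀ := hGcop d hGd
    have hdf₀ : d * f₀ ∣ f := Nat.Coprime.mul_dvd_of_dvd_of_dvd hcop hdvd hd₀
    set m := f / d with hm
    have hf₀m : f₀ ∣ m := (Nat.dvd_div_iff_mul_dvd hdvd).mpr hdf₀
    set k := m / f₀ with hk
    have hmk : f₀ * k = m := Nat.mul_div_cancel' hf₀m
    have hfd : d * m = f := Nat.mul_div_cancel' hdvd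
    have hm0 : m ≠ 0 := by
      intro h
      rw [h, mul_zero] at hfd
      exact hf0 hfd.symm
    have hk0 : k ≠ 0 := by
      intro h
      rw [h, mul_zero] at hmk
      exact hm0 hmk.symm
    have hdk : d * k = f / f₀ := by
      rw [hk, ← Nat.mul_div_assoc d hf₀m, hfd]
    -- reindex `range m` by `range f₀ ×ˢ range k`
    have hreidx : ∑ b ∈ Finset.range m, G b * lg (1 - ζ ^ (d * b))
        = ∑ p ∈ Finset.range f₀ ×ˢ Finset.range k,
            G (p.1 + f₀ * p.2) * lg (1 - ζ ^ (d * (p.1 + f₀ * p.2))) := by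
      refine Finset.sum_nbij' (fun b => (b % f₀, b / f₀)) (fun p => p.1 + f₀ * p.2)
        ?_ ?_ ?_ ?_ ?_
      · intro b hb
        refine Finset.mem_product.mpr ⟨Finset.mem_range.mpr
          (Nat.mod_lt b (Nat.pos_of_ne_zero hf₀0)), Finset.mem_range.mpr ?_⟩
        rw [Nat.div_lt_iff_lt_mul (Nat.pos_of_ne_zero hf₀0)]
        calc b < m := Finset.mem_range.mp hb
          _ = k * f₀ := by rw [mul_comm, hmk]
      · intro p hp
        obtain ⟨h1, h2⟩ := Finset.mem_product.mp hp
        refine Finset.mem_range.mpr ?_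
        calc p.1 + f₀ * p.2 < f₀ + f₀ * p.2 := by
              exact Nat.add_lt_add_right (Finset.mem_range.mp h1) _
          _ = f₀ * (p.2 + 1) := by ring
          _ ≤ f₀ * k := Nat.mul_le_mul_left _ (Finset.mem_range.mp h2)
          _ = m := hmk
      · intro b _
        exact (Nat.mod_add_div b f₀)
      · intro p hp
        obtain ⟨h1, _⟩ := Finset.mem_product.mp hp
        show ((p.1 + f₀ * p.2) % f₀, (p.1 + f₀ * p.2) / f₀) = p
        rw [Nat.add_mul_mod_self_left, Nat.mod_eq_of_lt (Finset.mem_range.mp h1),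
          Nat.add_mul_div_left _ _ (Nat.pos_of_ne_zero hf₀0),
          Nat.div_eq_of_lt (Finset.mem_range.mp h1), zero_add]
      · intro b _
        rw [Nat.mod_add_div b f₀]
    rw [hreidx, Finset.sum_product]
    refine Finset.sum_congr rfl fun c hc => ?_
    have hGper : ∀ j : ℕ, G (c + f₀ * j) = G c := by
      intro j
      simp only [hGdef, Nat.cast_add, Nat.cast_mul, ZMod.natCast_self, zero_mul, add_zero]
    by_cases hGc : G c = 0
    · simp [hGper, hGc]
    · have hccop : Nat.Coprime c f₀ := hGcop c hGc
      have hc0 : c ≠ 0 := by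
        intro h
        rw [h] at hccop
        exact hf₀1 (Nat.coprime_zero_left f₀ |>.mp hccop)
      simp only [hGper]
      rw [← Finset.mul_sum]
      congr 1
      -- inner log sum via the distribution relation
      have hη : IsPrimitiveRoot (ζ ^ (d * f₀)) k := by
        have := hζ.pow_of_dvd (p := d * f₀) (by positivity) hdf₀
        have hek : f / (d * f₀) = k := by
          have h : (d * f₀) * k = f := by rw [mul_assoc, hmk, hfd]
          rw [← h, Nat.mul_div_cancel_left k (by positivity)]
        rwa [hek] at this
      have hne : ∀ j ∈ Finset.range k, (1 : K) - ζ ^ (d * (c + f₀ * j)) ≠ 0 := by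
        intro j hj
        have hlt : d * (c + f₀ * j) < f := by
          calc d * (c + f₀ * j) < d * m := by
                refine (Nat.mul_lt_mul_left (Nat.pos_of_ne_zero hd0)).mpr ?_
                calc c + f₀ * j < f₀ + f₀ * j := Nat.add_lt_add_right (Finset.mem_range.mp hc) _
                  _ = f₀ * (j + 1) := by ring
                  _ ≤ f₀ * k := Nat.mul_le_mul_left _ (Finset.mem_range.mp hj)
                  _ = m := hmk
            _ = f := hfd
        have hpos : 0 < d * (c + f₀ * j) := by positivity
        intro h
        have : ζ ^ (d * (c + f₀ * j)) = 1 := (sub_eq_zero.mp h).symm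
        have := (hζ.pow_eq_one_iff_dvd _).mp this
        exact absurd (Nat.le_of_dvd hpos this) (not_le.mpr hlt)
      have hstep : ∑ j ∈ Finset.range k, lg (1 - ζ ^ (d * (c + f₀ * j)))
          = lg (1 - ζ ^ (f / f₀ * c)) := by
        have hexp : ∀ j, (1 : K) - ζ ^ (d * (c + f₀ * j))
            = 1 - (ζ ^ (d * f₀)) ^ j * ζ ^ (d * c) := by
          intro j
          rw [← pow_mul, ← pow_add]
          congr 2
          ring
        calc ∑ j ∈ Finset.range k, lg (1 - ζ ^ (d * (c + f₀ * j)))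
            = lg (∏ j ∈ Finset.range k, (1 - (ζ ^ (d * f₀)) ^ j * ζ ^ (d * c))) := by
              rw [lg_prod_aux hlg (fun j hj => by rw [← hexp j]; exact hne j hj)]
              exact Finset.sum_congr rfl fun j _ => by rw [hexp j]
          _ = lg (1 - (ζ ^ (d * c)) ^ k) := by
              rw [prod_one_sub_mul_pow (Nat.pos_of_ne_zero hk0) hη]
          _ = lg (1 - ζ ^ (f / f₀ * c)) := by
              rw [← pow_mul]
              congr 3
              rw [← hdk]
              ring
      exact hstep
  -- Step E : assemble
  rw [hLHS, hsieve, hRHS]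
  have hfinal : ∀ d ∈ f.divisors,
      ((ArithmeticFunction.moebius d : ℤ) : K) *
          ∑ b ∈ Finset.range (f / d), G (d * b) * lg (1 - ζ ^ (d * b))
        = (((ArithmeticFunction.moebius d : ℤ) : K) * G d) * T := by
    intro d hd
    have hsplit : ∑ b ∈ Finset.range (f / d), G (d * b) * lg (1 - ζ ^ (d * b))
        = G d * ∑ b ∈ Finset.range (f / d), G b * lg (1 - ζ ^ (d * b)) := by
      rw [Finset.mul_sum]
      exact Finset.sum_congr rfl fun b _ => by rw [hGmul d b, mul_assoc]
    rw [hsplit]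
    by_cases hGd : G d = 0
    · simp [hGd]
    · rw [hdist d hd hGd]
      ring
  rw [Finset.sum_congr rfl hfinal, ← Finset.sum_mul]
  congr 1
  let Ghom : ℕ →* K :=
    { toFun := G, map_one' := hG1, map_mul' := hGmul }
  exact moebius_sum_eq_prod Ghom hf0
end
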